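/- Suppose V has dimension 3 over ℝ. Then for every element U of the Clifford algebra Cl(Q), the sum U + involute(U) + reverse(U) + reverse(involute(U)) is a scalar, i.e. lies in the range of the algebra map ℝ → Cl(Q). -/

import Mathlib

open CliffordAlgebra

section aux
variable {V : Type*} [AddCommGroup V] [Module ℝ V] (Q : QuadraticForm ℝ V)

/-- The span of the 8 standard products of basis vectors. -/
noncomputable def cliffSpan (e : Fin 3 → V) : Submodule ℝ (CliffordAlgebra Q) :=
  Submodule.span ℝ {1, ι Q (e 0), ι Q (e 1), ι Q (e 2), ι Q (e 0) * ι Q (e 1),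
    ι Q (e 0) * ι Q (e 2), ι Q (e 1) * ι Q (e 2), ι Q (e 0) * (ι Q (e 1) * ι Q (e 2))}

lemma cliffSpan_mul_gen (e : Fin 3 → V) (i : Fin 3) (g : CliffordAlgebra Q)
    (hg : g ∈ ({1, ι Q (e 0), ι Q (e 1), ι Q (e 2), ι Q (e 0) * ι Q (e 1),
      ι Q (e 0) * ι Q (e 2), ι Q (e 1) * ι Q (e 2),
      ι Q (e 0) * (ι Q (e 1) * ι Q (e 2))} : Set (CliffordAlgebra Q))) :
    ι Q (e i) * g ∈ cliffSpan Q e := by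
  set S := cliffSpan Q e with hS
  have mem : ∀ x ∈ ({1, ι Q (e 0), ι Q (e 1), ι Q (e 2), ι Q (e 0) * ι Q (e 1),
      ι Q (e 0) * ι Q (e 2), ι Q (e 1) * ι Q (e 2),
      ι Q (e 0) * (ι Q (e 1) * ι Q (e 2))} : Set (CliffordAlgebra Q)), x ∈ S :=
    fun x hx => Submodule.subset_span hx
  have h1 : (1 : CliffordAlgebra Q) ∈ S := mem _ (Set.mem_insert _ _)
  have h0 : ι Q (e 0) ∈ S := mem _ (by right; exact Set.mem_insert _ _)
  have hb1 : ι Q (e 1) ∈ S := mem _ (by right; right; exact Set.mem_insert _ _)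
  have hb2 : ι Q (e 2) ∈ S := mem _ (by right; right; right; exact Set.mem_insert _ _)
  have h01 : ι Q (e 0) * ι Q (e 1) ∈ S := mem _ (by right; right; right; right; exact Set.mem_insert _ _)
  have h02 : ι Q (e 0) * ι Q (e 2) ∈ S := mem _ (by right; right; right; right; right; exact Set.mem_insert _ _)
  have h12 : ι Q (e 1) * ι Q (e 2) ∈ S := mem _ (by right; right; right; right; right; right; exact Set.mem_insert _ _)
  have h012 : ι Q (e 0) * (ι Q (e 1) * ι Q (e 2)) ∈ S := mem _ (by right; right; right; right; right; right; right; rfl)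
  have hsq : ∀ v : V, ι Q v * ι Q v = algebraMap ℝ _ (Q v) := fun v => ι_sq_scalar (Q := Q) v
  have hsw : ∀ v w : V, ι Q v * ι Q w =
      algebraMap ℝ _ (QuadraticMap.polar Q v w) - ι Q w * ι Q v := fun v w => ι_mul_ι_comm v w
  simp only [Set.mem_insert_iff, Set.mem_singleton_iff] at hg
  have hi : i = 0 ∨ i = 1 ∨ i = 2 := by omega
  rcases hi with rfl | rfl | rfl <;>
    rcases hg with rfl | rfl | rfl | rfl | rfl | rfl | rfl | rfl <;>
    (try simp only [Fin.isValue, mul_one])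
  · exact h0
  · rw [hsq]; simpa [Algebra.smul_def] using S.smul_mem (Q (e 0)) h1
  · exact h01
  · exact h02
  · rw [← mul_assoc, hsq, ← Algebra.smul_def]
    exact S.smul_mem _ hb1
  · rw [← mul_assoc, hsq, ← Algebra.smul_def]
    exact S.smul_mem _ hb2
  · exact h012
  · rw [← mul_assoc, ← mul_assoc, hsq, ← Algebra.smul_def, Algebra.smul_def, mul_assoc,
      ← Algebra.smul_def]
    exact S.smul_mem _ h12
  · exact hb1
  · rw [hsw]
    exact S.sub_mem (by simpa [Algebra.smul_def] using S.smul_mem (QuadraticMap.polar Q (e 1) (e 0)) h1) h01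
  · rw [hsq]; simpa [Algebra.smul_def] using S.smul_mem (Q (e 1)) h1
  · exact h12
  · -- x1 * (x0 * x1)
    rw [← mul_assoc, hsw (e 1) (e 0), sub_mul, mul_assoc, hsq, ← Algebra.smul_def,
      ← Algebra.commutes, ← Algebra.smul_def]
    exact S.sub_mem (S.smul_mem _ hb1) (S.smul_mem _ h0)
  · -- x1 * (x0 * x2)
    rw [← mul_assoc, hsw (e 1) (e 0), sub_mul, ← Algebra.smul_def, mul_assoc]
    exact S.sub_mem (S.smul_mem _ hb2) h012
  · -- x1 * (x1 * x2)
    rw [← mul_assoc, hsq, ← Algebra.smul_def]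
    exact S.smul_mem _ hb2
  · -- x1 * (x0 * (x1 * x2))
    rw [← mul_assoc, hsw (e 1) (e 0), sub_mul, ← Algebra.smul_def,
      mul_assoc (ι Q (e 0)), ← mul_assoc (ι Q (e 1)), hsq, ← Algebra.smul_def, mul_smul_comm]
    exact S.sub_mem (S.smul_mem _ h12) (S.smul_mem _ h02)
  · exact hb2
  · rw [hsw]
    exact S.sub_mem (by simpa [Algebra.smul_def] using S.smul_mem (QuadraticMap.polar Q (e 2) (e 0)) h1) h02
  · rw [hsw]
    exact S.sub_mem (by simpa [Algebra.smul_def] using S.smul_mem (QuadraticMap.polar Q (e 2) (e 1)) h1) h12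
  · rw [hsq]; simpa [Algebra.smul_def] using S.smul_mem (Q (e 2)) h1
  · -- x2 * (x0 * x1)
    rw [← mul_assoc, hsw (e 2) (e 0), sub_mul, ← Algebra.smul_def, mul_assoc (ι Q (e 0)),
      hsw (e 2) (e 1), mul_sub, ← Algebra.commutes, ← Algebra.smul_def]
    exact S.sub_mem (S.smul_mem _ hb1) (S.sub_mem (S.smul_mem _ h0) h012)
  · -- x2 * (x0 * x2)
    rw [← mul_assoc, hsw (e 2) (e 0), sub_mul, ← Algebra.smul_def, mul_assoc (ι Q (e 0)),
      hsq, ← Algebra.commutes, ← Algebra.smul_def]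
    exact S.sub_mem (S.smul_mem _ hb2) (S.smul_mem _ h0)
  · -- x2 * (x1 * x2)
    rw [← mul_assoc, hsw (e 2) (e 1), sub_mul, ← Algebra.smul_def, mul_assoc (ι Q (e 1)),
      hsq, ← Algebra.commutes, ← Algebra.smul_def]
    exact S.sub_mem (S.smul_mem _ hb2) (S.smul_mem _ hb1)
  · -- x2 * (x0 * (x1 * x2))
    rw [← mul_assoc, hsw (e 2) (e 0), sub_mul, ← Algebra.smul_def, mul_assoc (ι Q (e 0)),
      ← mul_assoc (ι Q (e 2)), hsw (e 2) (e 1), sub_mul, mul_sub,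
      ← Algebra.smul_def, mul_smul_comm, mul_assoc (ι Q (e 1)), hsq,
      ← Algebra.commutes, ← Algebra.smul_def, mul_smul_comm]
    exact S.sub_mem (S.smul_mem _ h12) (S.sub_mem (S.smul_mem _ h02) (S.smul_mem _ h01))

lemma ι_mem_cliffSpan (e : Fin 3 → V) (hspan : ∀ v : V, v ∈ Submodule.span ℝ (Set.range e))
    (v : V) : ι Q v ∈ cliffSpan Q e := by
  have hv := hspan v
  induction hv using Submodule.span_induction with
  | mem w hw =>
    obtain ⟨i, rfl⟩ := hw
    have hi : i = 0 ∨ i = 1 ∨ i = 2 := by omega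
    rcases hi with rfl | rfl | rfl
    · exact Submodule.subset_span (by right; exact Set.mem_insert _ _)
    · exact Submodule.subset_span (by right; right; exact Set.mem_insert _ _)
    · exact Submodule.subset_span (by right; right; right; exact Set.mem_insert _ _)
  | zero => simp only [map_zero]; exact Submodule.zero_mem _
  | add x y hx hy ihx ihy => rw [map_add]; exact Submodule.add_mem _ ihx ihy
  | smul a x hx ihx => rw [map_smul]; exact Submodule.smul_mem _ _ ihx

lemma mul_mem_cliffSpan (e : Fin 3 → V) (hspan : ∀ v : V, v ∈ Submodule.span ℝ (Set.range e))
    (v : V) {y : CliffordAlgebra Q} (hy : y ∈ cliffSpan Q e) :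
    ι Q v * y ∈ cliffSpan Q e := by
  induction hy using Submodule.span_induction with
  | mem g hg =>
    have hv := hspan v
    induction hv using Submodule.span_induction with
    | mem w hw =>
      obtain ⟨i, rfl⟩ := hw
      exact cliffSpan_mul_gen Q e i g hg
    | zero => simp only [map_zero, zero_mul]; exact Submodule.zero_mem _
    | add x y hx hy ihx ihy => rw [map_add, add_mul]; exact Submodule.add_mem _ ihx ihy
    | smul a x hx ihx => rw [map_smul, smul_mul_assoc]; exact Submodule.smul_mem _ _ ihx
  | zero => rw [mul_zero]; exact Submodule.zero_mem _
  | add x y hx hy ihx ihy => rw [mul_add]; exact Submodule.add_mem _ ihx ihy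
  | smul a x hx ihx => rw [mul_smul_comm]; exact Submodule.smul_mem _ _ ihx

lemma cliffSpan_eq_top (e : Fin 3 → V) (hspan : ∀ v : V, v ∈ Submodule.span ℝ (Set.range e)) :
    cliffSpan Q e = ⊤ := by
  have h1 : (1 : CliffordAlgebra Q) ∈ cliffSpan Q e := Submodule.subset_span (Set.mem_insert _ _)
  have key : ∀ x : CliffordAlgebra Q,
      x ∈ cliffSpan Q e ∧ ∀ y ∈ cliffSpan Q e, x * y ∈ cliffSpan Q e := by
    intro x
    induction x using CliffordAlgebra.induction with
    | algebraMap r =>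
      constructor
      · rw [Algebra.algebraMap_eq_smul_one]; exact Submodule.smul_mem _ _ h1
      · intro y hy; rw [← Algebra.smul_def]; exact Submodule.smul_mem _ _ hy
    | ι v =>
      exact ⟨ι_mem_cliffSpan Q e hspan v, fun y hy => mul_mem_cliffSpan Q e hspan v hy⟩
    | mul a c ha hc =>
      exact ⟨ha.2 c hc.1, fun y hy => by rw [mul_assoc]; exact ha.2 _ (hc.2 y hy)⟩
    | add a c ha hc =>
      exact ⟨Submodule.add_mem _ ha.1 hc.1, fun y hy => by
        rw [add_mul]; exact Submodule.add_mem _ (ha.2 y hy) (hc.2 y hy)⟩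
  exact eq_top_iff.mpr fun x _ => (key x).1


end aux

theorem stmt_3 {V : Type*} [AddCommGroup V] [Module ℝ V] (Q : QuadraticForm ℝ V)
    (h : Module.finrank ℝ V = 3) (U : CliffordAlgebra Q) :
    U + involute U + reverse U + reverse (involute U) ∈
      Set.range (algebraMap ℝ (CliffordAlgebra Q)) := by
  have hfin : Module.Finite ℝ V := Module.finite_of_finrank_eq_succ h
  let b : Module.Basis (Fin 3) ℝ V := Module.finBasisOfFinrankEq ℝ V h
  have hspan : ∀ v : V, v ∈ Submodule.span ℝ (Set.range ⇑b) := fun v => by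
    rw [b.span_eq]; trivial
  have hU : U ∈ cliffSpan Q ⇑b := by rw [cliffSpan_eq_top Q ⇑b hspan]; trivial
  have hodd : ∀ x : CliffordAlgebra Q, involute x = -x →
      x + involute x + reverse x + reverse (involute x) ∈
        Set.range (algebraMap ℝ (CliffordAlgebra Q)) := by
    intro x hx
    refine ⟨0, ?_⟩
    rw [map_zero, hx, map_neg]
    abel
  have hpair : ∀ v w : V, (ι Q v * ι Q w) + involute (ι Q v * ι Q w) + reverse (ι Q v * ι Q w)
      + reverse (involute (ι Q v * ι Q w)) ∈ Set.range (algebraMap ℝ (CliffordAlgebra Q)) := by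
    intro v w
    refine ⟨2 * QuadraticMap.polar Q v w, ?_⟩
    have h2 : involute (ι Q v * ι Q w) = ι Q v * ι Q w := by
      rw [map_mul, involute_ι, involute_ι, neg_mul_neg]
    have h3 : reverse (Q := Q) (ι Q v * ι Q w) = ι Q w * ι Q v := by
      rw [reverse.map_mul, reverse_ι, reverse_ι]
    rw [h2, h3, two_mul, map_add, ← ι_mul_ι_add_swap]
    abel
  induction hU using Submodule.span_induction with
  | mem g hg =>
    simp only [Set.mem_insert_iff, Set.mem_singleton_iff] at hg
    rcases hg with rfl | rfl | rfl | rfl | rfl | rfl | rfl | rfl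
    · refine ⟨4, ?_⟩
      rw [map_one, reverse.map_one]
      norm_num
      exact map_ofNat _ 4
    · exact hodd _ (involute_ι _)
    · exact hodd _ (involute_ι _)
    · exact hodd _ (involute_ι _)
    · exact hpair _ _
    · exact hpair _ _
    · exact hpair _ _
    · refine hodd _ ?_
      rw [map_mul, map_mul, involute_ι, involute_ι, involute_ι, neg_mul_neg, neg_mul]
  | zero => exact ⟨0, by simp⟩
  | add x y hx hy ihx ihy =>
    obtain ⟨r, hr⟩ := ihx
    obtain ⟨s, hs⟩ := ihy
    refine ⟨r + s, ?_⟩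
    rw [map_add, hr, hs]
    simp only [map_add]
    abel
  | smul a x hx ihx =>
    obtain ⟨r, hr⟩ := ihx
    refine ⟨a * r, ?_⟩
    rw [map_mul, ← Algebra.smul_def, hr]
    simp only [map_smul, smul_add]
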